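/- arXiv:2106.01648 — 2 statements merged into one kernel-verified Lean document; each statement's English description precedes it below -/
import Mathlib

section
/- Let V be a finite type and c : V → V → ℝ symmetric (c i j = c j i) and nonnegative (c i j ≥ 0). Let σ be a tour on a finite set S ⊆ V with at least three elements, i.e., a permutation of V with support S whose restriction to S is a single cycle, and let T ⊆ S. Then 2 · Σ_{i ∈ S} c(i, σ i) ≥ Σ_{i ∈ T} (two-smallest sum of the function j ↦ c i j over S \ {i}). -/
/-- The two-smallest sum of `f` over `S`: the minimum of `f j + f k`
over all pairs of distinct elements `j, k ∈ S`. -/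
noncomputable def twoMinSum {V : Type*} (f : V → ℝ) (S : Finset V) : ℝ :=
  sInf {x : ℝ | ∃ j ∈ S, ∃ k ∈ S, j ≠ k ∧ x = f j + f k}

/-- A tour on a finite set `S`: a permutation whose support equals `S`
and whose restriction to `S` is a single cycle. -/
def IsTour {V : Type*} [Fintype V] [DecidableEq V] (σ : Equiv.Perm V)
    (S : Finset V) : Prop :=
  σ.IsCycle ∧ σ.support = S

theorem stmt8 {V : Type*} [Fintype V] [DecidableEq V] (c : V → V → ℝ)
    (hsym : ∀ i j, c i j = c j i) (hc : ∀ i j, 0 ≤ c i j)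
    (σ : Equiv.Perm V) (S : Finset V) (hσ : IsTour σ S) (hS : 3 ≤ S.card)
    (T : Finset V) (hT : T ⊆ S) :
    ∑ i ∈ T, twoMinSum (fun j => c i j) (S.erase i) ≤ 2 * ∑ i ∈ S, c i (σ i) := by
  obtain ⟨hcyc, hsupp⟩ := hσ
  have key : ∀ i ∈ S, twoMinSum (fun j => c i j) (S.erase i)
      ≤ c i (σ i) + c i (σ⁻¹ i) := by
    intro i hi
    have hi' : i ∈ σ.support := by rw [hsupp]; exact hi
    have h1 : σ i ≠ i := Equiv.Perm.mem_support.mp hi'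
    have h2 : σ⁻¹ i ≠ i := by
      intro h
      apply h1
      conv_lhs => rw [← h]
      simp
    have h3 : σ i ≠ σ⁻¹ i := by
      intro h
      have h2' : (σ ^ 2) i = i := by
        have : σ (σ i) = i := by rw [h]; simp
        simpa [pow_succ, pow_two] using this
      have hord : orderOf σ ∣ 2 := by
        have : σ ^ 2 = 1 := by
          rw [hcyc.pow_eq_one_iff]
          exact ⟨i, h1, h2'⟩
        exact orderOf_dvd_of_pow_eq_one this
      have : orderOf σ ≤ 2 := Nat.le_of_dvd (by norm_num) hord
      have horder := hcyc.orderOf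
      rw [hsupp] at horder
      omega
    have hσS : σ i ∈ S.erase i := by
      refine Finset.mem_erase.mpr ⟨h1, ?_⟩
      rw [← hsupp]
      exact Equiv.Perm.apply_mem_support.mpr hi'
    have hσ'S : σ⁻¹ i ∈ S.erase i := by
      refine Finset.mem_erase.mpr ⟨h2, ?_⟩
      rw [← hsupp, ← Equiv.Perm.support_inv]
      exact Equiv.Perm.apply_mem_support.mpr (by rwa [Equiv.Perm.support_inv])
    apply csInf_le
    · refine ⟨0, fun x hx => ?_⟩
      obtain ⟨j, _, k, _, _, rfl⟩ := hx
      exact add_nonneg (hc i j) (hc i k)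
    · exact ⟨σ i, hσS, σ⁻¹ i, hσ'S, h3, rfl⟩
  have step1 : ∑ i ∈ T, twoMinSum (fun j => c i j) (S.erase i)
      ≤ ∑ i ∈ T, (c i (σ i) + c i (σ⁻¹ i)) :=
    Finset.sum_le_sum fun i hi => key i (hT hi)
  have step2 : ∑ i ∈ T, (c i (σ i) + c i (σ⁻¹ i))
      ≤ ∑ i ∈ S, (c i (σ i) + c i (σ⁻¹ i)) :=
    Finset.sum_le_sum_of_subset_of_nonneg hT
      (fun i _ _ => add_nonneg (hc _ _) (hc _ _))
  have hinv : ∑ i ∈ S, c i (σ⁻¹ i) = ∑ i ∈ S, c i (σ i) := by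
    have := Equiv.Perm.sum_comp σ S (fun j => c j (σ⁻¹ j)) (by rw [← hsupp]; intro a ha; simpa using ha)
    have hh : ∀ x, σ⁻¹ (σ x) = x := fun x => σ.symm_apply_apply x
    simp only [hh] at this
    rw [← this]
    exact Finset.sum_congr rfl fun i _ => hsym _ _
  calc ∑ i ∈ T, twoMinSum (fun j => c i j) (S.erase i)
      ≤ ∑ i ∈ S, (c i (σ i) + c i (σ⁻¹ i)) := step1.trans step2
    _ = 2 * ∑ i ∈ S, c i (σ i) := by
        rw [Finset.sum_add_distrib, hinv]; ring
end

section
/- Let V be a finite type and c : V → V → ℝ satisfy the triangle inequality (c i k ≤ c i j + c j k for all i, j, k). Let σ be a tour on a finite set S ⊆ V with at least four elements, i.e., a permutation of V with support S whose restriction to S is a single cycle, and let i ∈ S. Then there exists a tour σ' on S \ {i} with cost Σ_{j ∈ S \ {i}} c(j, σ' j) ≤ Σ_{j ∈ S} c(j, σ j). -/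
theorem stmt9 {V : Type*} [Fintype V] [DecidableEq V] (c : V → V → ℝ)
    (htri : ∀ i j k, c i k ≤ c i j + c j k)
    (σ : Equiv.Perm V) (S : Finset V) (hσ : IsTour σ S) (hS : 4 ≤ S.card)
    (i : V) (hi : i ∈ S) :
    ∃ σ' : Equiv.Perm V, IsTour σ' (S.erase i) ∧
      ∑ j ∈ S.erase i, c j (σ' j) ≤ ∑ j ∈ S, c j (σ j) := by
  obtain ⟨hc, hsupp⟩ := hσ
  have hiS : i ∈ σ.support := hsupp ▸ hi
  have hσi : σ i ≠ i := Equiv.Perm.mem_support.mp hiS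
  have hσσi : σ (σ i) ≠ i := by
    intro h
    have h2 : σ ^ 2 = 1 := hc.pow_eq_one_iff.2 ⟨i, hσi, by simpa [pow_succ, pow_zero] using h⟩
    have ho : orderOf σ ≤ 2 := orderOf_le_of_pow_eq_one (by norm_num) h2
    rw [hc.orderOf, hsupp] at ho
    omega
  refine ⟨Equiv.swap i (σ i) * σ, ⟨hc.swap_mul hσi hσσi, by
    rw [Equiv.Perm.support_swap_mul_eq σ i hσσi, hsupp, Finset.sdiff_singleton_eq_erase]⟩, ?_⟩
  set σ' : Equiv.Perm V := Equiv.swap i (σ i) * σ with hσ'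
  have hkey : ∀ j, j ≠ σ⁻¹ i → j ≠ i → σ' j = σ j := by
    intro j hj hji
    have h1 : σ j ≠ i := fun h => hj (by rw [← h]; exact (σ.symm_apply_apply j).symm)
    have h2 : σ j ≠ σ i := fun h => hji (σ.injective h)
    simp [hσ', Equiv.Perm.mul_apply, Equiv.swap_apply_of_ne_of_ne h1 h2]
  have hinv : σ' (σ⁻¹ i) = σ i := by
    simp [hσ', Equiv.Perm.mul_apply]
  have hmem : σ⁻¹ i ∈ S.erase i := by
    rw [Finset.mem_erase]
    constructor
    · intro h
      exact hσi (by nth_rewrite 1 [← h]; exact σ.apply_symm_apply i)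
    · rw [← hsupp]
      simp only [Equiv.Perm.mem_support, (show σ (σ⁻¹ i) = i from σ.apply_symm_apply i)]
      exact fun h => hσi (by nth_rewrite 1 [h]; exact σ.apply_symm_apply i)
  have hmem' : σ⁻¹ i ∈ S := Finset.mem_of_mem_erase hmem
  rw [← Finset.add_sum_erase _ _ hmem, ← Finset.add_sum_erase _ _ hmem',
    Finset.erase_right_comm]
  have hsum : ∑ j ∈ (S.erase (σ⁻¹ i)).erase i, c j (σ' j)
      = ∑ j ∈ (S.erase (σ⁻¹ i)).erase i, c j (σ j) := by
    apply Finset.sum_congr rfl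
    intro j hj
    rw [hkey j (Finset.ne_of_mem_erase (Finset.mem_of_mem_erase hj))
      (Finset.ne_of_mem_erase hj)]
  rw [hsum, hinv]
  have hierase : i ∈ S.erase (σ⁻¹ i) := by
    rw [Finset.mem_erase]
    refine ⟨fun h => hσi ?_, hi⟩
    conv_lhs => rw [h]
    simp
  rw [← Finset.add_sum_erase _ _ hierase]
  simp only [(show σ (σ⁻¹ i) = i from σ.apply_symm_apply i)]
  have := htri (σ⁻¹ i) i (σ i)
  linarith
end
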